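/- Let Λ(β) = rα(1−β) − θκ(β) with κ(β) = √((1/2 + a/σ²)² + αβ(β−1)) − (1/2 + a/σ²). If 0 < α < θ²/r², then Λ attains its maximum over β ∈ ℝ at β* = 1/2 − (1/2)√(((1 + 2a/σ²)² − α)/(θ²/r² − α)), and the expression under the square root is positive since α ≤ 1 < (1 + 2a/σ²)². -/

import Mathlib

/-- Cauchy–Schwarz tangent-line bound used for the optimality argument. -/
lemma cs_tangent_aux (α c s x y : ℝ) (hα : 0 < α) (hc : 0 < c) (hs : 0 < s)
    (h : s^2 = c^2 + α*y^2) :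
    (c^2 + α*x*y)/s ≤ Real.sqrt (c^2 + α*x^2) := by
  rcases le_or_gt ((c^2 + α*x*y)/s) 0 with h0 | h0
  · exact h0.trans (Real.sqrt_nonneg _)
  · rw [Real.le_sqrt h0.le, div_pow, div_le_iff₀ (by positivity), h]
    · nlinarith [mul_nonneg (mul_nonneg hα.le (sq_nonneg c)) (sq_nonneg (x-y))]
    · nlinarith [sq_nonneg c, mul_nonneg hα.le (sq_nonneg x)]

/-- Under the 3/2 model, if 0 < α < θ²/r² then Λ(β) = rα(1−β) − θκ(β) attains
its maximum at β* = 1/2 − (1/2)√(((1+2a/σ²)²−α)/(θ²/r²−α)), the expression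
under the square root being positive. -/
theorem three_halves_optimal_leverage (r a θ σ α : ℝ) (hr : 0 < r) (ha : 0 < a)
    (hθ : 0 < θ) (hσ : 0 < σ) (hα0 : 0 < α) (hα1 : α ≤ 1)
    (hcase : α < θ^2 / r^2)
    (Λ : ℝ → ℝ)
    (hΛ : ∀ β, Λ β = r * α * (1 - β)
        - θ * (Real.sqrt ((1/2 + a/σ^2)^2 + α*β*(β-1)) - (1/2 + a/σ^2))) :
    0 < ((1 + 2*a/σ^2)^2 - α) / (θ^2/r^2 - α) ∧
    ∀ β : ℝ, Λ β ≤ Λ (1/2 - (1/2) * Real.sqrt (((1 + 2*a/σ^2)^2 - α) / (θ^2/r^2 - α))) := by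
  have hσ2 : (0:ℝ) < σ^2 := by positivity
  have hr2 : (0:ℝ) < r^2 := by positivity
  obtain ⟨p, hpd⟩ : ∃ p : ℝ, p = 1/2 + a/σ^2 := ⟨_, rfl⟩
  rw [← hpd] at hΛ
  have hp : 1/2 < p := by
    have : 0 < a/σ^2 := by positivity
    rw [hpd]; linarith
  have h2p : (1 + 2*a/σ^2) = 2*p := by rw [hpd]; ring
  have hc2 : 0 < p^2 - α/4 := by nlinarith
  have hq : 0 < θ^2 - α*r^2 := by
    have := (lt_div_iff₀ hr2).mp hcase
    linarith
  have hnum : 0 < (1 + 2*a/σ^2)^2 - α := by rw [h2p]; nlinarith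
  have hden : 0 < θ^2/r^2 - α := sub_pos.mpr hcase
  refine ⟨div_pos hnum hden, ?_⟩
  obtain ⟨c, hcd⟩ : ∃ c : ℝ, c = Real.sqrt (p^2 - α/4) := ⟨_, rfl⟩
  obtain ⟨w, hwd⟩ : ∃ w : ℝ, w = Real.sqrt (θ^2 - α*r^2) := ⟨_, rfl⟩
  have hc : c^2 = p^2 - α/4 := by rw [hcd]; exact Real.sq_sqrt hc2.le
  have hw : w^2 = θ^2 - α*r^2 := by rw [hwd]; exact Real.sq_sqrt hq.le
  have hcpos : 0 < c := hcd ▸ Real.sqrt_pos.mpr hc2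
  have hwpos : 0 < w := hwd ▸ Real.sqrt_pos.mpr hq
  have hw0 : w ≠ 0 := hwpos.ne'
  have hc0 : c ≠ 0 := hcpos.ne'
  have hθ0 : θ ≠ 0 := hθ.ne'
  -- the argument of the outer sqrt is (2rc/w)^2
  have harg : ((1 + 2*a/σ^2)^2 - α) / (θ^2/r^2 - α) = (2*r*c/w)^2 := by
    rw [h2p, div_eq_iff hden.ne', show (2*r*c/w)^2 = 4*r^2*c^2/w^2 by ring, hc, hw]
    field_simp
    ring
  have hsq : Real.sqrt (((1 + 2*a/σ^2)^2 - α) / (θ^2/r^2 - α)) = 2*r*c/w := by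
    rw [harg, Real.sqrt_sq (by positivity)]
  rw [hsq, show (1:ℝ)/2 - 1/2 * (2*r*c/w) = 1/2 - r*c/w by ring]
  -- value of the sqrt at the candidate optimum B = 1/2 - rc/w
  have h3 : c^2 + α*(r*c/w)^2 = c^2*θ^2/w^2 := by
    field_simp
    linear_combination hw
  have hEB : p^2 + α*(1/2 - r*c/w)*((1/2 - r*c/w)-1) = (c*θ/w)^2 := by
    linear_combination h3 - hc
  have hsB : Real.sqrt (p^2 + α*(1/2 - r*c/w)*((1/2 - r*c/w)-1)) = c*θ/w := by
    rw [hEB, Real.sqrt_sq (by positivity)]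
  intro β
  rw [hΛ β, hΛ (1/2 - r*c/w), hsB]
  have hspos : 0 < c*θ/w := by positivity
  -- Cauchy–Schwarz tangent bound with x = β - 1/2, y = -(rc/w)
  have key := cs_tangent_aux α c (c*θ/w) (β-1/2) (-(r*c/w)) hα0 hcpos hspos
      (by linear_combination -h3)
  have hEβ : p^2 + α*β*(β-1) = c^2 + α*(β-1/2)^2 := by linear_combination -hc
  rw [← hEβ] at key
  -- exact first-order identity at the optimum
  have heq : θ*((c^2 + α*(β-1/2)*(-(r*c/w)))/(c*θ/w))
      = r*α*((1/2 - r*c/w)-β) + θ*(c*θ/w) := by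
    field_simp
    linear_combination (2*c) * hw
  have hkey' := mul_le_mul_of_nonneg_left key hθ.le
  linarith [hkey', heq]
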